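/- Define w_n = R2_n. Then for all integers n ≥ 6, w satisfies the sixth-order linear recurrence w_n = 2·w_{n-1} + 2·w_{n-2} - 4·w_{n-3} - 2·w_{n-4} + 2·w_{n-5} + w_{n-6} (as an identity of integers). -/
import Mathlib


theorem stmt_13 (r R1 R2 w : ℕ → ℕ)
    (hr : ∀ n : ℕ, 2 ≤ n → r n = r (n - 1) + r (n - 2))
    (hR1 : ∀ n : ℕ, 2 ≤ n → R1 n = R1 (n - 2) + r n)
    (hR2 : ∀ n : ℕ, 2 ≤ n → R2 n = R2 (n - 1) + R2 (n - 2) + R1 (n - 2) + r n)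
    (hr0 : r 0 = 1) (hr1 : r 1 = 1)
    (hR10 : R1 0 = 1) (hR11 : R1 1 = 1)
    (hR20 : R2 0 = 1) (hR21 : R2 1 = 2)
    (hw : ∀ n : ℕ, w n = R2 n) :
    ∀ n : ℕ, 6 ≤ n →
      (w n : ℤ) = 2 * w (n - 1) + 2 * w (n - 2) - 4 * w (n - 3) - 2 * w (n - 4)
        + 2 * w (n - 5) + w (n - 6) := by
  intro n hn
  obtain ⟨m, rfl⟩ : ∃ m, n = m + 6 := ⟨n - 6, by omega⟩
  have er2 : r (m+2) = r (m+1) + r m := by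
    have h := hr (m+2) (by omega); rwa [show m+2-1 = m+1 by omega, show m+2-2 = m by omega] at h
  have er3 : r (m+3) = r (m+2) + r (m+1) := by
    have h := hr (m+3) (by omega); rwa [show m+3-1 = m+2 by omega, show m+3-2 = m+1 by omega] at h
  have er4 : r (m+4) = r (m+3) + r (m+2) := by
    have h := hr (m+4) (by omega); rwa [show m+4-1 = m+3 by omega, show m+4-2 = m+2 by omega] at h
  have er5 : r (m+5) = r (m+4) + r (m+3) := by
    have h := hr (m+5) (by omega); rwa [show m+5-1 = m+4 by omega, show m+5-2 = m+3 by omega] at h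
  have er6 : r (m+6) = r (m+5) + r (m+4) := by
    have h := hr (m+6) (by omega); rwa [show m+6-1 = m+5 by omega, show m+6-2 = m+4 by omega] at h
  have e12 : R1 (m+2) = R1 m + r (m+2) := by
    have h := hR1 (m+2) (by omega); rwa [show m+2-2 = m by omega] at h
  have e13 : R1 (m+3) = R1 (m+1) + r (m+3) := by
    have h := hR1 (m+3) (by omega); rwa [show m+3-2 = m+1 by omega] at h
  have e14 : R1 (m+4) = R1 (m+2) + r (m+4) := by
    have h := hR1 (m+4) (by omega); rwa [show m+4-2 = m+2 by omega] at h
  have e22 : R2 (m+2) = R2 (m+1) + R2 m + R1 m + r (m+2) := by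
    have h := hR2 (m+2) (by omega); rwa [show m+2-1 = m+1 by omega, show m+2-2 = m by omega] at h
  have e23 : R2 (m+3) = R2 (m+2) + R2 (m+1) + R1 (m+1) + r (m+3) := by
    have h := hR2 (m+3) (by omega); rwa [show m+3-1 = m+2 by omega, show m+3-2 = m+1 by omega] at h
  have e24 : R2 (m+4) = R2 (m+3) + R2 (m+2) + R1 (m+2) + r (m+4) := by
    have h := hR2 (m+4) (by omega); rwa [show m+4-1 = m+3 by omega, show m+4-2 = m+2 by omega] at h
  have e25 : R2 (m+5) = R2 (m+4) + R2 (m+3) + R1 (m+3) + r (m+5) := by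
    have h := hR2 (m+5) (by omega); rwa [show m+5-1 = m+4 by omega, show m+5-2 = m+3 by omega] at h
  have e26 : R2 (m+6) = R2 (m+5) + R2 (m+4) + R1 (m+4) + r (m+6) := by
    have h := hR2 (m+6) (by omega); rwa [show m+6-1 = m+5 by omega, show m+6-2 = m+4 by omega] at h
  rw [show m+6-1 = m+5 by omega, show m+6-2 = m+4 by omega, show m+6-3 = m+3 by omega,
    show m+6-4 = m+2 by omega, show m+6-5 = m+1 by omega, show m+6-6 = m by omega]
  simp only [hw]
  push_cast [er2, er3, er4, er5, er6, e12, e13, e14, e22, e23, e24, e25, e26]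
  ring
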